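/- Let N ≥ 2, and suppose p_N : {0,...,N} → (0,1) is monotone non-decreasing. Define p_{N-1}(a) = p_N(a)/(1 - p_N(a+1) + p_N(a)) for a = 0,...,N-1. Then p_{N-1} is monotone non-decreasing on {0,...,N-1}. -/
import Mathlib


/-- Monotonicity of the predictive probability function is preserved under the
coherent reduction equation. -/
theorem stmt_5 (N : ℕ) (hN : 2 ≤ N) (pN pM : ℕ → ℝ)
    (hrange : ∀ a ≤ N, pN a ∈ Set.Ioo (0 : ℝ) 1)
    (hmono : ∀ a b, a ≤ b → b ≤ N → pN a ≤ pN b)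
    (hred : ∀ a ≤ N - 1, pM a = pN a / (1 - pN (a + 1) + pN a)) :
    ∀ a b, a ≤ b → b ≤ N - 1 → pM a ≤ pM b := by
  have step : ∀ a, a + 1 ≤ N - 1 → pM a ≤ pM (a + 1) := by
    intro a ha
    have hN1 : a + 1 ≤ N := by omega
    have hN2 : a + 2 ≤ N := by omega
    have h0 := hrange a (by omega)
    have h1 := hrange (a + 1) hN1
    have h2 := hrange (a + 2) hN2
    have hm01 : pN a ≤ pN (a + 1) := hmono a (a + 1) (by omega) hN1
    have hm12 : pN (a + 1) ≤ pN (a + 2) := hmono (a + 1) (a + 2) (by omega) hN2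
    have hDa : 0 < 1 - pN (a + 1) + pN a := by
      have := h1.2; have := h0.1; linarith
    have hDb : 0 < 1 - pN (a + 2) + pN (a + 1) := by
      have := h2.2; have := h1.1; linarith
    rw [hred a (by omega), hred (a + 1) ha]
    rw [div_le_div_iff₀ hDa hDb]
    nlinarith [h0.1, h1.2, h2.2, mul_le_mul_of_nonneg_left hm12 h0.1.le]
  intro a b hab hb
  induction b with
  | zero => interval_cases a; rfl
  | succ n ih =>
    rcases Nat.eq_or_lt_of_le hab with h | h
    · rw [h]
    · exact le_trans (ih (by omega) (by omega)) (step n hb)
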